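/- In the SIR-type model, if the initial values S(0), E(0), I(0), R(0) are nonnegative and β, σ, γ ≥ 0, N > 0, then all compartments remain nonnegative for all t ≥ 0. -/

import Mathlib

open Set Filter Topology

lemma no_left_min (f : ℝ → ℝ) (t0 d : ℝ) (ht0 : 0 < t0)
    (hf : HasDerivAt f d t0) (hd : 0 < d) (hft0 : f t0 = 0)
    (hpos : ∀ s ∈ Ico (0:ℝ) t0, 0 < f s) : False := by
  have h1 : Tendsto (slope f t0) (𝓝[<] t0) (𝓝 d) :=
    (hasDerivAt_iff_tendsto_slope.mp hf).mono_left
      (nhdsWithin_mono _ (fun x hx => ne_of_lt hx))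
  have h2 : ∀ᶠ s in 𝓝[<] t0, 0 < slope f t0 s := h1.eventually (eventually_gt_nhds hd)
  have h3 : Ioo (0:ℝ) t0 ∈ 𝓝[<] t0 := Ioo_mem_nhdsLT_of_mem ⟨ht0, le_refl t0⟩
  rcases (h2.and (eventually_of_mem h3 (fun x hx => hx))).exists with ⟨s, hs1, hs2⟩
  have hfs : 0 < f s := hpos s ⟨hs2.1.le, hs2.2⟩
  have : slope f t0 s < 0 := by
    rw [slope_def_field, hft0]
    have : s - t0 < 0 := by linarith [hs2.2]
    exact div_neg_of_pos_of_neg (by linarith) this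
  linarith [hs1]

lemma prod_lb {x y a C : ℝ} (hx : -a ≤ x) (hxC : x ≤ C) (hy : -a ≤ y) (hyC : y ≤ C)
    (ha : 0 ≤ a) (haC : a ≤ C) : -(a*C) ≤ x * y := by
  rcases le_or_gt 0 x with h | h
  · nlinarith [mul_nonneg h (by linarith : (0:ℝ) ≤ y + a), mul_nonneg ha (by linarith : (0:ℝ) ≤ C - x)]
  · nlinarith [mul_nonneg (neg_nonneg.2 h.le) (by linarith : (0:ℝ) ≤ C - y),
      mul_nonneg (by linarith : (0:ℝ) ≤ x + a) (le_trans ha haC)]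

set_option maxHeartbeats 1000000 in
/-- In the SEIR model with nonnegative initial data and nonnegative parameters, all
compartments remain nonnegative for all t ≥ 0. -/
theorem seir_nonnegativity
    (S E I R : ℝ → ℝ) (β σ γ N : ℝ)
    (hβ : 0 ≤ β) (hσ : 0 ≤ σ) (hγ : 0 ≤ γ) (hNpos : 0 < N)
    (hS : ∀ t ∈ Set.Ici (0 : ℝ), HasDerivAt S (-(β * I t / N) * S t) t)
    (hE : ∀ t ∈ Set.Ici (0 : ℝ), HasDerivAt E ((β * I t / N) * S t - σ * E t) t)
    (hI : ∀ t ∈ Set.Ici (0 : ℝ), HasDerivAt I (σ * E t - γ * I t) t)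
    (hR : ∀ t ∈ Set.Ici (0 : ℝ), HasDerivAt R (γ * I t) t)
    (hS0 : 0 ≤ S 0) (hE0 : 0 ≤ E 0) (hI0 : 0 ≤ I 0) (hR0 : 0 ≤ R 0) :
    ∀ t ∈ Set.Ici (0 : ℝ), 0 ≤ S t ∧ 0 ≤ E t ∧ 0 ≤ I t ∧ 0 ≤ R t := by
  have hScont : ∀ t ∈ Ici (0:ℝ), ContinuousAt S t := fun t ht => (hS t ht).continuousAt
  have hEcont : ∀ t ∈ Ici (0:ℝ), ContinuousAt E t := fun t ht => (hE t ht).continuousAt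
  have hIcont : ∀ t ∈ Ici (0:ℝ), ContinuousAt I t := fun t ht => (hI t ht).continuousAt
  -- extended (globally continuous) versions
  have hb : ∀ (X : ℝ → ℝ), (∀ t ∈ Ici (0:ℝ), ContinuousAt X t) →
      Continuous (fun t => X (max t 0)) := by
    intro X hX
    rw [continuous_iff_continuousAt]
    intro t
    have h1 : ContinuousAt (fun t : ℝ => max t 0) t :=
      (continuous_id.max continuous_const).continuousAt
    have h2 : ContinuousAt (X ∘ fun t : ℝ => max t 0) t :=
      ContinuousAt.comp (hX _ (le_max_right t 0)) h1
    exact h2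
  have hSb := hb S hScont
  have hEb := hb E hEcont
  have hIb := hb I hIcont
  -- Main step: S, E, I are nonnegative on [0, ∞)
  have key : ∀ T ∈ Ici (0:ℝ), 0 ≤ S T ∧ 0 ≤ E T ∧ 0 ≤ I T := by
    intro T hT
    -- bounds on |S|, |I| on [0,T]
    obtain ⟨CS, hCS⟩ : ∃ C, ∀ x ∈ Icc (0:ℝ) T, ‖S x‖ ≤ C :=
      isCompact_Icc.exists_bound_of_continuousOn
        (fun x hx => (hScont x hx.1).continuousWithinAt)
    obtain ⟨CI, hCI⟩ : ∃ C, ∀ x ∈ Icc (0:ℝ) T, ‖I x‖ ≤ C :=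
      isCompact_Icc.exists_bound_of_continuousOn
        (fun x hx => (hIcont x hx.1).continuousWithinAt)
    obtain ⟨C, hC0, hSbd, hIbd⟩ : ∃ C : ℝ, 0 < C ∧ (∀ x ∈ Icc (0:ℝ) T, |S x| ≤ C) ∧
        (∀ x ∈ Icc (0:ℝ) T, |I x| ≤ C) := by
      refine ⟨|CS| + |CI| + 1, by positivity, ?_, ?_⟩
      · intro x hx
        have := hCS x hx
        simp only [Real.norm_eq_abs] at this
        have h1 : CS ≤ |CS| := le_abs_self CS
        have h2 : (0:ℝ) ≤ |CI| := abs_nonneg _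
        linarith
      · intro x hx
        have := hCI x hx
        simp only [Real.norm_eq_abs] at this
        have h1 : CI ≤ |CI| := le_abs_self CI
        have h2 : (0:ℝ) ≤ |CS| := abs_nonneg _
        linarith
    obtain ⟨K, hKdef, hK0⟩ : ∃ K : ℝ, K = β * C / N + σ + γ + 1 ∧ 0 < K := by
      refine ⟨_, rfl, ?_⟩
      have h := div_nonneg (mul_nonneg hβ hC0.le) hNpos.le
      linarith
    -- barrier claim
    have claim : ∀ ε : ℝ, 0 < ε → ε * Real.exp (K * T) ≤ C →
        ∀ t ∈ Icc (0:ℝ) T,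
          0 < S t + ε * Real.exp (K * t) ∧ 0 < E t + ε * Real.exp (K * t) ∧
          0 < I t + ε * Real.exp (K * t) := by
      intro ε hε hεC
      by_contra hcon
      push_neg at hcon
      obtain ⟨t1, ht1, hbad⟩ := hcon
      -- the "bad" set
      set Z : Set ℝ := {t ∈ Icc (0:ℝ) T | S (max t 0) + ε * Real.exp (K * t) ≤ 0 ∨
          E (max t 0) + ε * Real.exp (K * t) ≤ 0 ∨
          I (max t 0) + ε * Real.exp (K * t) ≤ 0} with hZdef
      have hexpcont : Continuous (fun t : ℝ => ε * Real.exp (K * t)) :=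
        continuous_const.mul (Real.continuous_exp.comp (continuous_const.mul continuous_id))
      have hZclosed : IsClosed Z := by
        have h1 : IsClosed {t : ℝ | S (max t 0) + ε * Real.exp (K * t) ≤ 0} :=
          isClosed_le (hSb.add hexpcont) continuous_const
        have h2 : IsClosed {t : ℝ | E (max t 0) + ε * Real.exp (K * t) ≤ 0} :=
          isClosed_le (hEb.add hexpcont) continuous_const
        have h3 : IsClosed {t : ℝ | I (max t 0) + ε * Real.exp (K * t) ≤ 0} :=
          isClosed_le (hIb.add hexpcont) continuous_const
        exact isClosed_Icc.inter ((h1.union (h2.union h3)))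
      have ht1' : t1 ∈ Z := by
        refine ⟨ht1, ?_⟩
        have hm : max t1 0 = t1 := max_eq_left ht1.1
        rw [hm]
        by_cases h1 : 0 < S t1 + ε * Real.exp (K * t1)
        · by_cases h2 : 0 < E t1 + ε * Real.exp (K * t1)
          · exact Or.inr (Or.inr (hbad h1 h2))
          · exact Or.inr (Or.inl (not_lt.mp h2))
        · exact Or.inl (not_lt.mp h1)
      have hZne : Z.Nonempty := ⟨t1, ht1'⟩
      have hZbdd : BddBelow Z := ⟨0, fun t ht => ht.1.1⟩
      obtain ⟨t0, ht0def⟩ : ∃ t0 : ℝ, t0 = sInf Z := ⟨_, rfl⟩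
      have ht0Z : t0 ∈ Z := ht0def ▸ hZclosed.csInf_mem hZne hZbdd
      have ht0Icc : t0 ∈ Icc (0:ℝ) T := ht0Z.1
      have ht0pos : 0 < t0 := by
        rcases lt_or_eq_of_le ht0Icc.1 with h | h
        · exact h
        · exfalso
          have hm : max t0 0 = t0 := max_eq_left ht0Icc.1
          have he0 : Real.exp (K * t0) = 1 := by rw [← h]; simp
          rcases ht0Z.2 with hc | hc | hc <;>
            rw [hm, ← h, mul_zero, Real.exp_zero, mul_one] at hc <;>
            linarith [hS0, hE0, hI0]
      have ht0Ici : t0 ∈ Ici (0:ℝ) := ht0pos.le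
      -- positivity strictly before t0
      clear hbad ht1' hZdef
      have hbefore : ∀ s ∈ Ico (0:ℝ) t0,
          0 < S s + ε * Real.exp (K * s) ∧ 0 < E s + ε * Real.exp (K * s) ∧
          0 < I s + ε * Real.exp (K * s) := by
        intro s hs
        have hsT : s ∈ Icc (0:ℝ) T := ⟨hs.1, le_trans hs.2.le ht0Icc.2⟩
        have hsnotZ : s ∉ Z := fun hmem =>
          absurd (ht0def ▸ csInf_le hZbdd hmem : t0 ≤ s) (not_le.mpr hs.2)
        have hm : max s 0 = s := max_eq_left hs.1
        by_contra hcon2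
        apply hsnotZ
        refine ⟨hsT, ?_⟩
        rw [hm]
        rcases not_and_or.mp hcon2 with h | h
        · exact Or.inl (not_lt.mp h)
        · rcases not_and_or.mp h with h' | h'
          · exact Or.inr (Or.inl (not_lt.mp h'))
          · exact Or.inr (Or.inr (not_lt.mp h'))
      -- nonnegativity at t0 by left limits
      have hIooMem : Ioo (0:ℝ) t0 ∈ 𝓝[<] t0 := Ioo_mem_nhdsLT_of_mem ⟨ht0pos, le_refl t0⟩
      have hleftle : ∀ (X : ℝ → ℝ), ContinuousAt X t0 →
          (∀ s ∈ Ico (0:ℝ) t0, 0 < X s + ε * Real.exp (K * s)) →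
          0 ≤ X t0 + ε * Real.exp (K * t0) := by
        intro X hXc hXpos
        have htd : Tendsto (fun s => X s + ε * Real.exp (K * s)) (𝓝[<] t0)
            (𝓝 (X t0 + ε * Real.exp (K * t0))) :=
          ((hXc.add hexpcont.continuousAt).tendsto).mono_left nhdsWithin_le_nhds
        refine ge_of_tendsto htd ?_
        filter_upwards [hIooMem] with s hs
        exact (hXpos s ⟨hs.1.le, hs.2⟩).le
      have hSnn : 0 ≤ S t0 + ε * Real.exp (K * t0) :=
        hleftle S (hScont t0 ht0Ici) (fun s hs => (hbefore s hs).1)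
      have hEnn : 0 ≤ E t0 + ε * Real.exp (K * t0) :=
        hleftle E (hEcont t0 ht0Ici) (fun s hs => (hbefore s hs).2.1)
      have hInn : 0 ≤ I t0 + ε * Real.exp (K * t0) :=
        hleftle I (hIcont t0 ht0Ici) (fun s hs => (hbefore s hs).2.2)
      obtain ⟨e, hedef⟩ : ∃ e : ℝ, e = Real.exp (K * t0) := ⟨_, rfl⟩
      rw [← hedef] at hSnn hEnn hInn
      have he0 : 0 < e := hedef ▸ Real.exp_pos _
      have hεe : ε * e ≤ C := by
        refine le_trans ?_ hεC
        have : e ≤ Real.exp (K * T) := by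
          rw [hedef]
          exact Real.exp_le_exp.mpr (mul_le_mul_of_nonneg_left ht0Icc.2 hK0.le)
        nlinarith
      -- bounds at t0
      have hSlb : -(ε * e) ≤ S t0 := by linarith
      have hElb : -(ε * e) ≤ E t0 := by linarith
      have hIlb : -(ε * e) ≤ I t0 := by linarith
      have hSub : S t0 ≤ C := le_of_abs_le (hSbd t0 ht0Icc)
      have hIub : I t0 ≤ C := le_of_abs_le (hIbd t0 ht0Icc)
      have hεe0 : 0 ≤ ε * e := by positivity
      -- derivative of the barrier term
      have hexpd : HasDerivAt (fun t => ε * Real.exp (K * t)) (ε * (e * K)) t0 := by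
        rw [hedef]
        simpa using (((hasDerivAt_id t0).const_mul K).exp.const_mul ε)
      have hm0 : max t0 0 = t0 := max_eq_left ht0Icc.1
      -- key product bound
      have hprod : -((ε * e) * C) ≤ I t0 * S t0 :=
        prod_lb hIlb hIub hSlb hSub hεe0 hεe
      rcases ht0Z.2 with hc | hc | hc
      all_goals rw [hm0, ← hedef] at hc
      · -- S-case
        have hSeq : S t0 + ε * e = 0 := le_antisymm hc hSnn
        have hd : HasDerivAt (fun t => S t + ε * Real.exp (K * t))
            (-(β * I t0 / N) * S t0 + ε * (e * K)) t0 := (hS t0 ht0Ici).add hexpd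
        have hSeq' : S t0 + ε * Real.exp (K * t0) = 0 := by rw [← hedef]; exact hSeq
        refine no_left_min _ t0 _ ht0pos hd ?_ hSeq' (fun s hs => (hbefore s hs).1)
        have hSval : S t0 = -(ε * e) := by linarith
        rw [hSval]
        have hIabs : |I t0| ≤ C := hIbd t0 ht0Icc
        have h1 : -(β * I t0 / N) * -(ε * e) = (β / N) * (I t0 * (ε * e)) := by ring
        have h2 : -(C * (ε * e)) ≤ I t0 * (ε * e) := by
          have := (abs_le.mp hIabs).1
          nlinarith
        have h3 : 0 ≤ β / N := by positivity
        have h4 : (β / N) * (I t0 * (ε * e)) ≥ (β / N) * (-(C * (ε * e))) :=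
          mul_le_mul_of_nonneg_left h2 h3
        have hbn : (β / N) * (C * (ε * e)) = (β * C / N) * (ε * e) := by ring
        nlinarith [mul_pos hε he0]
      · -- E-case
        have hEeq : E t0 + ε * e = 0 := le_antisymm hc hEnn
        have hd : HasDerivAt (fun t => E t + ε * Real.exp (K * t))
            ((β * I t0 / N) * S t0 - σ * E t0 + ε * (e * K)) t0 := (hE t0 ht0Ici).add hexpd
        have hEeq' : E t0 + ε * Real.exp (K * t0) = 0 := by rw [← hedef]; exact hEeq
        refine no_left_min _ t0 _ ht0pos hd ?_ hEeq' (fun s hs => (hbefore s hs).2.1)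
        have hEval : E t0 = -(ε * e) := by linarith
        have h1 : (β * I t0 / N) * S t0 = (β / N) * (I t0 * S t0) := by ring
        have h3 : 0 ≤ β / N := by positivity
        have h4 : (β / N) * (I t0 * S t0) ≥ (β / N) * (-((ε * e) * C)) :=
          mul_le_mul_of_nonneg_left hprod h3
        have hσE : -(σ * E t0) = σ * (ε * e) := by rw [hEval]; ring
        have hE2 : ε * (e * K) = (β / N) * ((ε * e) * C) + σ * (ε * e) + γ * (ε * e) + ε * e := by
          rw [hKdef]; ring
        have hE3 : (β / N) * (-((ε * e) * C)) = -((β / N) * ((ε * e) * C)) := by ring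
        linarith [h4, h1, hσE, hE2, hE3, mul_pos hε he0, mul_nonneg hσ hεe0,
          mul_nonneg hγ hεe0]
      · -- I-case
        have hIeq : I t0 + ε * e = 0 := le_antisymm hc hInn
        have hd : HasDerivAt (fun t => I t + ε * Real.exp (K * t))
            (σ * E t0 - γ * I t0 + ε * (e * K)) t0 := (hI t0 ht0Ici).add hexpd
        have hIeq' : I t0 + ε * Real.exp (K * t0) = 0 := by rw [← hedef]; exact hIeq
        refine no_left_min _ t0 _ ht0pos hd ?_ hIeq' (fun s hs => (hbefore s hs).2.2)
        have hIval : I t0 = -(ε * e) := by linarith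
        have h1 : σ * E t0 ≥ σ * (-(ε * e)) := mul_le_mul_of_nonneg_left hElb hσ
        have h2 : -(γ * I t0) = γ * (ε * e) := by rw [hIval]; ring
        have h3 : σ * -(ε * e) = -(σ * (ε * e)) := by ring
        have hE2 : ε * (e * K) = (β / N) * ((ε * e) * C) + σ * (ε * e) + γ * (ε * e) + ε * e := by
          rw [hKdef]; ring
        have h5 : 0 ≤ (β / N) * ((ε * e) * C) :=
          mul_nonneg (div_nonneg hβ hNpos.le) (mul_nonneg hεe0 hC0.le)
        linarith [h1, h2, h3, hE2, h5, mul_pos hε he0, mul_nonneg hσ hεe0, mul_nonneg hγ hεe0]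
    -- deduce nonnegativity at T from the claim
    have conc : ∀ (X : ℝ → ℝ),
        (∀ ε : ℝ, 0 < ε → ε * Real.exp (K * T) ≤ C → 0 < X T + ε * Real.exp (K * T)) →
        0 ≤ X T := by
      intro X h
      by_contra hneg
      push_neg at hneg
      obtain ⟨e, hedef⟩ : ∃ e : ℝ, e = Real.exp (K * T) := ⟨_, rfl⟩
      have he0 : 0 < e := hedef ▸ Real.exp_pos _
      obtain ⟨ε, hεdef⟩ : ∃ ε : ℝ, ε = min (C / e) (-(X T) / e) := ⟨_, rfl⟩
      have hε0 : 0 < ε := hεdef ▸ lt_min (div_pos hC0 he0) (div_pos (by linarith) he0)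
      have h1 : ε * e ≤ C := by
        have hεle : ε ≤ C / e := by rw [hεdef]; exact min_le_left _ _
        have hh := mul_le_mul_of_nonneg_right hεle he0.le
        rwa [div_mul_cancel₀ _ (ne_of_gt he0)] at hh
      have h2 : ε * e ≤ -(X T) := by
        have hεle : ε ≤ -(X T) / e := by rw [hεdef]; exact min_le_right _ _
        have hh := mul_le_mul_of_nonneg_right hεle he0.le
        rwa [div_mul_cancel₀ _ (ne_of_gt he0)] at hh
      have h1' : ε * Real.exp (K * T) ≤ C := by rw [← hedef]; exact h1
      have h3 := h ε hε0 h1'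
      rw [← hedef] at h3
      linarith
    refine ⟨conc S (fun ε hε hεC => (claim ε hε hεC T ⟨hT, le_refl T⟩).1),
      conc E (fun ε hε hεC => (claim ε hε hεC T ⟨hT, le_refl T⟩).2.1),
      conc I (fun ε hε hεC => (claim ε hε hεC T ⟨hT, le_refl T⟩).2.2)⟩
  -- now R via monotonicity
  have hRmono : MonotoneOn R (Ici (0:ℝ)) := by
    apply monotoneOn_of_deriv_nonneg (convex_Ici 0)
    · exact fun t ht => (hR t ht).continuousAt.continuousWithinAt
    · intro t ht
      rw [interior_Ici] at ht
      exact ((hR t (mem_Ici.mpr (le_of_lt ht))).differentiableAt).differentiableWithinAt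
    · intro t ht
      rw [interior_Ici] at ht
      rw [(hR t (mem_Ici.mpr (le_of_lt ht))).deriv]
      exact mul_nonneg hγ (key t (mem_Ici.mpr (le_of_lt ht))).2.2
  intro t ht
  refine ⟨(key t ht).1, (key t ht).2.1, (key t ht).2.2, ?_⟩
  have := hRmono (self_mem_Ici) ht ht
  linarith
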